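/- The height of the triangle P₀P₁Q₁ with respect to the base P₀P₁ equals √(h² + 4 sin²(πρ) sin²(πρ + π/n)) = √(h² + (cos(2πρ + π/n) − cos(π/n))²). That is, |P₀Q₁|² − ((|P₀P₁|² + |P₀Q₁|² − |P₁Q₁|²)/(2|P₀P₁|))² = h² + (cos(2πρ + π/n) − cos(π/n))². -/

import Mathlib

open Real Complex

/-- Euclidean distance on ℂ × ℝ. -/
noncomputable def eDist (p q : ℂ × ℝ) : ℝ :=
  Real.sqrt (‖p.1 - q.1‖ ^ 2 + (p.2 - q.2) ^ 2)

lemma absdiff (x y : ℝ) :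
    ‖Complex.exp ((x:ℂ) * Complex.I) - Complex.exp ((y:ℂ) * Complex.I)‖ ^ 2
      = 2 - 2 * Real.cos (x - y) := by
  rw [Complex.sq_norm, Complex.normSq_sub]
  simp [Complex.normSq_apply, Complex.exp_ofReal_mul_I_re, Complex.exp_ofReal_mul_I_im,
    Complex.mul_re, Complex.conj_re, Complex.conj_im, Real.cos_sub]
  nlinarith [Real.sin_sq_add_cos_sq x, Real.sin_sq_add_cos_sq y]

lemma eDist_key (x y hz : ℝ) :
    eDist (Complex.exp ((x:ℂ) * Complex.I), (0:ℝ)) (Complex.exp ((y:ℂ) * Complex.I), hz) ^ 2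
      = 2 - 2 * Real.cos (x - y) + hz ^ 2 := by
  unfold eDist
  rw [Real.sq_sqrt (by positivity)]
  simp only [absdiff]
  ring

theorem stmt3 (n : ℕ) (hn : 3 ≤ n) (h ρ : ℝ) (hh : 0 < h)
    (P₀ P₁ Q₁ : ℂ × ℝ)
    (hP0 : P₀ = (1, 0))
    (hP1 : P₁ = (Complex.exp (2 * Real.pi * Complex.I / n), 0))
    (hQ1 : Q₁ = (Complex.exp (2 * Real.pi * Complex.I * ρ + 2 * Real.pi * Complex.I / n), h)) :
    eDist P₀ Q₁ ^ 2 -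
      ((eDist P₀ P₁ ^ 2 + eDist P₀ Q₁ ^ 2 - eDist P₁ Q₁ ^ 2) / (2 * eDist P₀ P₁)) ^ 2
      = h ^ 2 + (Real.cos (2 * Real.pi * ρ + Real.pi / n) - Real.cos (Real.pi / n)) ^ 2 ∧
    h ^ 2 + (Real.cos (2 * Real.pi * ρ + Real.pi / n) - Real.cos (Real.pi / n)) ^ 2
      = h ^ 2 + 4 * Real.sin (Real.pi * ρ) ^ 2 * Real.sin (Real.pi * ρ + Real.pi / n) ^ 2 := by
  have hn0 : (0:ℝ) < n := by positivity
  have hn1 : (1:ℝ) < n := by exact_mod_cast lt_of_lt_of_le (by norm_num) hn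
  have hP0' : P₀ = (Complex.exp (((0:ℝ):ℂ) * Complex.I), (0:ℝ)) := by
    rw [hP0]; norm_num
  have hP1' : P₁ = (Complex.exp (((2 * Real.pi / n : ℝ):ℂ) * Complex.I), (0:ℝ)) := by
    rw [hP1]; congr 1; congr 1; push_cast; ring
  have hQ1' : Q₁ = (Complex.exp (((2 * Real.pi * ρ + 2 * Real.pi / n : ℝ):ℂ) * Complex.I), h) := by
    rw [hQ1]; congr 1; congr 1; push_cast; ring
  -- distance squares
  have hA : eDist P₀ Q₁ ^ 2
      = 2 - 2 * Real.cos (2 * Real.pi * ρ + 2 * Real.pi / n) + h ^ 2 := by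
    rw [hP0', hQ1', eDist_key]
    rw [show (0:ℝ) - (2 * Real.pi * ρ + 2 * Real.pi / n) = -(2 * Real.pi * ρ + 2 * Real.pi / n) by ring,
      Real.cos_neg]
  have hC : eDist P₁ Q₁ ^ 2 = 2 - 2 * Real.cos (2 * Real.pi * ρ) + h ^ 2 := by
    rw [hP1', hQ1', eDist_key]
    rw [show 2 * Real.pi / n - (2 * Real.pi * ρ + 2 * Real.pi / n) = -(2 * Real.pi * ρ) by ring,
      Real.cos_neg]
  have hB0 : eDist P₀ P₁ ^ 2 = 2 - 2 * Real.cos (2 * Real.pi / n) := by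
    rw [hP0', hP1', eDist_key]
    rw [show (0:ℝ) - 2 * Real.pi / n = -(2 * Real.pi / n) by ring, Real.cos_neg]
    ring
  -- half angle
  have ha : 0 < Real.pi / n := by positivity
  have ha2 : Real.pi / n < Real.pi := by
    rw [div_lt_iff₀ hn0]; nlinarith [Real.pi_pos]
  have hsa : 0 < Real.sin (Real.pi / n) := Real.sin_pos_of_pos_of_lt_pi ha ha2
  have hB : eDist P₀ P₁ ^ 2 = 4 * Real.sin (Real.pi / n) ^ 2 := by
    rw [hB0, show 2 * Real.pi / n = Real.pi / n + Real.pi / n by ring, Real.cos_add]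
    linear_combination (-2:ℝ) * Real.sin_sq_add_cos_sq (Real.pi / n)
  have hdnn : 0 ≤ eDist P₀ P₁ := Real.sqrt_nonneg _
  have hd : 0 < eDist P₀ P₁ := by
    nlinarith [mul_pos hsa hsa]
  constructor
  · set s := Real.sin (Real.pi / n) with hs
    set c := Real.cos (Real.pi / n) with hc
    set S1 := Real.sin (2 * Real.pi * ρ + Real.pi / n) with hS1
    set C1 := Real.cos (2 * Real.pi * ρ + Real.pi / n) with hC1
    have hcos1 : Real.cos (2 * Real.pi * ρ + 2 * Real.pi / n) = C1 * c - S1 * s := by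
      rw [show 2 * Real.pi * ρ + 2 * Real.pi / n
          = (2 * Real.pi * ρ + Real.pi / n) + Real.pi / n by ring, Real.cos_add]
    have hcos2 : Real.cos (2 * Real.pi * ρ) = C1 * c + S1 * s := by
      rw [show 2 * Real.pi * ρ = (2 * Real.pi * ρ + Real.pi / n) - Real.pi / n by ring,
        Real.cos_sub]
    have hnum : eDist P₀ P₁ ^ 2 + eDist P₀ Q₁ ^ 2 - eDist P₁ Q₁ ^ 2 = 4 * s * (s + S1) := by
      rw [hB0, hA, hC, hcos1, hcos2,
        show 2 * Real.pi / n = Real.pi / n + Real.pi / n by ring, Real.cos_add]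
      linear_combination (-2:ℝ) * Real.sin_sq_add_cos_sq (Real.pi / n)
    have hfrac : ((eDist P₀ P₁ ^ 2 + eDist P₀ Q₁ ^ 2 - eDist P₁ Q₁ ^ 2) /
        (2 * eDist P₀ P₁)) ^ 2 = (s + S1) ^ 2 := by
      have h2 : (2 * eDist P₀ P₁) ^ 2 = 16 * s ^ 2 := by rw [mul_pow, hB]; ring
      rw [hnum, div_pow, h2]
      field_simp
      ring
    rw [hfrac, hA, hcos1]
    linear_combination (-1:ℝ) * Real.sin_sq_add_cos_sq (Real.pi / n)
      + (-1:ℝ) * Real.sin_sq_add_cos_sq (2 * Real.pi * ρ + Real.pi / n)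
  · rw [Real.cos_sub_cos,
      show (2 * Real.pi * ρ + Real.pi / n + Real.pi / n) / 2 = Real.pi * ρ + Real.pi / n by ring,
      show (2 * Real.pi * ρ + Real.pi / n - Real.pi / n) / 2 = Real.pi * ρ by ring]
    ring
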